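/- For a forest T_v rooted at a hypernode v with S(v) nonempty, the variance of the SEI estimate satisfies: Var(|v|·C_SEI(T_v)) = Σ_{w ∈ H(v)} [ 1 / C(|S(v)|−1, |w|−1) ] · [ r(S(v)) / r(w) ] · ( Var(|w|·C_SEI(T_w)) + Cost(T_w)² ) − Cost(T_{S(v)})². (Paper's Theorem 4.) -/

import Mathlib

open Finset

/-- A finite rooted tree on a finite node type `V`.  The root is its own parent,
every non-root node has a parent whose depth is one smaller, and the root is the
unique node of depth `0`. -/
structure FinRootedTree (V : Type) [Fintype V] [DecidableEq V] where
  root : V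
  parent : V → V
  depth : V → ℕ
  depth_root : depth root = 0
  parent_root : parent root = root
  depth_parent : ∀ v, v ≠ root → depth (parent v) + 1 = depth v
  eq_root_of_depth_zero : ∀ v, depth v = 0 → v = root

namespace FinRootedTree

variable {V : Type} [Fintype V] [DecidableEq V]

/-- The set of children of a node. -/
def children (T : FinRootedTree V) (x : V) : Finset V :=
  Finset.univ.filter fun w => w ≠ T.root ∧ T.parent w = x

/-- `S(v)`: the set of all children of nodes of a hypernode `v`. -/
def succs (T : FinRootedTree V) (v : Finset V) : Finset V :=
  v.biUnion T.children

/-- The set of nodes of the subtree rooted at `x` (the descendants of `x`,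
including `x` itself). -/
def desc (T : FinRootedTree V) (x : V) : Finset V :=
  Finset.univ.filter fun w =>
    x ∈ (Finset.range (T.depth w + 1)).image fun k => T.parent^[k] w

/-- `Cost(T_x)`: the total cost of the subtree rooted at `x`. -/
noncomputable def subtreeCost (T : FinRootedTree V) (c : V → ℝ) (x : V) : ℝ :=
  ∑ w ∈ T.desc x, c w

/-- `Cost(T_v)`: the total cost of the forest rooted at the hypernode `v`. -/
noncomputable def forestCost (T : FinRootedTree V) (c : V → ℝ) (v : Finset V) : ℝ :=
  ∑ x ∈ v, T.subtreeCost c x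

/-- `H(v)`: the hyperchildren of `v` for budget `B`, i.e. the subsets of `S(v)`
of size `min B |S(v)|`. -/
def hyper (T : FinRootedTree V) (B : ℕ) (v : Finset V) : Finset (Finset V) :=
  (T.succs v).powersetCard (min B (T.succs v).card)

/-- A hypernode: a nonempty set of distinct nodes, all at the same depth. -/
def IsHypernode (T : FinRootedTree V) (v : Finset V) : Prop :=
  v.Nonempty ∧ ∀ a ∈ v, ∀ b ∈ v, T.depth a = T.depth b

/-- Expectation functional of the SEI estimator `C_SEI(T_v)` (with importance
function `r`): `seiE T c B r fuel v g` is `E[g(C_SEI(T_v))]`, defined by the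
recursion of Algorithm 2, where the hypernode `w` is drawn from `H(v)` with
probability `r(w) / (r(S(v)) * C(|S(v)|-1, |w|-1))`, with enough fuel to reach
the leaves. -/
noncomputable def seiE (T : FinRootedTree V) (c : V → ℝ) (B : ℕ)
    (r : V → ℝ) : ℕ → Finset V → (ℝ → ℝ) → ℝ
  | 0, v, g => g ((∑ x ∈ v, c x) / (v.card : ℝ))
  | fuel + 1, v, g =>
      if T.succs v = ∅ then g ((∑ x ∈ v, c x) / (v.card : ℝ))
      else
        ∑ w ∈ T.hyper B v,
          ((∑ a ∈ w, r a) /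
              ((∑ a ∈ T.succs v, r a) *
                ((((T.succs v).card - 1).choose (w.card - 1) : ℕ) : ℝ))) *
            seiE T c B r fuel w fun y =>
              g ((∑ x ∈ v, c x) / (v.card : ℝ) +
                ((w.card : ℝ) / (v.card : ℝ)) *
                  ((∑ a ∈ T.succs v, r a) / (∑ a ∈ w, r a)) * y)

/-- `Var(|v| * C_SEI(T_v))`. -/
noncomputable def seiVar (T : FinRootedTree V) (c : V → ℝ) (B : ℕ) (r : V → ℝ)
    (fuel : ℕ) (v : Finset V) : ℝ :=
  seiE T c B r fuel v (fun y => ((v.card : ℝ) * y) ^ 2) -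
    (seiE T c B r fuel v fun y => (v.card : ℝ) * y) ^ 2

/-! ### Auxiliary lemmas -/

section Counting
variable {V : Type} [DecidableEq V]

lemma card_filter_mem_powersetCard' (s : Finset V) (k : ℕ) (hk : 1 ≤ k) {a : V} (ha : a ∈ s) :
    ((s.powersetCard k).filter (fun w => a ∈ w)).card = (s.card - 1).choose (k - 1) := by
  have : ((s.powersetCard k).filter (fun w => a ∈ w)).card
      = ((s.erase a).powersetCard (k - 1)).card := by
    refine Finset.card_bij' (fun w _ => w.erase a) (fun t _ => insert a t) ?hi ?hj ?li ?ri
    case hi =>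
      intro w hw
      rw [mem_filter, mem_powersetCard] at hw
      rw [mem_powersetCard]
      exact ⟨erase_subset_erase a hw.1.1, by rw [card_erase_of_mem hw.2, hw.1.2]⟩
    case hj =>
      intro t ht
      rw [mem_powersetCard] at ht
      have hat : a ∉ t := fun h => notMem_erase a s (ht.1 h)
      rw [mem_filter, mem_powersetCard]
      refine ⟨⟨insert_subset ha (ht.1.trans (erase_subset a s)), ?_⟩, mem_insert_self a t⟩
      rw [card_insert_of_notMem hat, ht.2]; omega
    case li =>
      intro w hw
      rw [mem_filter] at hw
      exact insert_erase hw.2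
    case ri =>
      intro t ht
      rw [mem_powersetCard] at ht
      exact erase_insert (fun h => notMem_erase a s (ht.1 h))
  rw [this, Finset.card_powersetCard, card_erase_of_mem ha]

lemma sum_powersetCard_sum' (s : Finset V) (f : V → ℝ) (k : ℕ) (hk : 1 ≤ k) :
    ∑ w ∈ s.powersetCard k, ∑ a ∈ w, f a
      = (((s.card - 1).choose (k - 1) : ℕ) : ℝ) * ∑ a ∈ s, f a := by
  have h1 : ∀ w ∈ s.powersetCard k, ∑ a ∈ w, f a = ∑ a ∈ s, if a ∈ w then f a else 0 := by
    intro w hw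
    rw [mem_powersetCard] at hw
    rw [Finset.sum_ite_mem, Finset.inter_eq_right.mpr hw.1]
  rw [Finset.sum_congr rfl h1, Finset.sum_comm]
  rw [Finset.mul_sum]
  apply Finset.sum_congr rfl
  intro a ha
  rw [← Finset.sum_filter, Finset.sum_const, card_filter_mem_powersetCard' s k hk ha]
  simp [mul_comm]
end Counting

variable (T : FinRootedTree V)

/-! ### Tree structure lemmas -/

lemma depth_iterate (x : V) : ∀ k, k ≤ T.depth x → T.depth (T.parent^[k] x) = T.depth x - k := by
  intro k
  induction k with
  | zero => simp
  | succ n ih =>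
    intro h
    have hn : T.depth (T.parent^[n] x) = T.depth x - n := ih (Nat.le_of_succ_le h)
    have hpos : 0 < T.depth (T.parent^[n] x) := by omega
    have hne : T.parent^[n] x ≠ T.root := by
      intro he; rw [he, T.depth_root] at hpos; omega
    have := T.depth_parent _ hne
    rw [Function.iterate_succ_apply']
    omega

lemma iterate_ne_root (x : V) (k : ℕ) (h : k < T.depth x) : T.parent^[k] x ≠ T.root := by
  intro he
  have := T.depth_iterate x k (le_of_lt h)
  rw [he, T.depth_root] at this; omega

lemma depth_lt_card (x : V) : T.depth x < Fintype.card V := by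
  have hinj : Set.InjOn (fun k => T.parent^[k] x) (Finset.range (T.depth x + 1)) := by
    intro a ha b hb hab
    simp only [coe_range, Set.mem_Iio] at ha hb
    have h1 := T.depth_iterate x a (by omega)
    have h2 := T.depth_iterate x b (by omega)
    simp only at hab
    rw [hab, h2] at h1
    omega
  have := Finset.card_le_card_of_injOn (fun k => T.parent^[k] x)
    (fun a _ => mem_univ _) hinj
  simp only [Finset.card_range, Finset.card_univ] at this
  omega

lemma mem_children_iff {x w : V} : w ∈ T.children x ↔ w ≠ T.root ∧ T.parent w = x := by
  simp [children]

lemma depth_of_mem_children {x w : V} (h : w ∈ T.children x) : T.depth w = T.depth x + 1 := by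
  rw [T.mem_children_iff] at h
  have := T.depth_parent w h.1
  rw [h.2] at this; omega

lemma mem_desc_iff {x w : V} : w ∈ T.desc x ↔ ∃ k, k ≤ T.depth w ∧ T.parent^[k] w = x := by
  simp only [desc, mem_filter, mem_univ, true_and, mem_image, mem_range, Nat.lt_succ_iff]

lemma depth_le_of_mem_desc {x w : V} (h : w ∈ T.desc x) : T.depth x ≤ T.depth w := by
  rw [T.mem_desc_iff] at h
  obtain ⟨k, hk, he⟩ := h
  have := T.depth_iterate w k hk
  rw [he] at this; omega

lemma desc_eq (x : V) : T.desc x = insert x ((T.children x).biUnion T.desc) := by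
  ext w
  simp only [mem_insert, mem_biUnion, T.mem_desc_iff, T.mem_children_iff]
  constructor
  · rintro ⟨k, hk, he⟩
    rcases k with _ | k'
    · left; rw [← he]; rfl
    · right
      refine ⟨T.parent^[k'] w, ⟨?_, ?_⟩, ⟨k', by omega, rfl⟩⟩
      · exact T.iterate_ne_root w k' (by omega)
      · rw [← Function.iterate_succ_apply' T.parent k' w]; exact he
  · rintro (rfl | ⟨y, ⟨hy1, hy2⟩, k, hk, he⟩)
    · exact ⟨0, by omega, rfl⟩
    · have hd : T.depth y = T.depth w - k := by
        have := T.depth_iterate w k hk; rw [he] at this; exact this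
      have hy : 0 < T.depth y := by
        have := T.depth_parent y hy1; omega
      refine ⟨k + 1, by omega, ?_⟩
      rw [Function.iterate_succ_apply', he, hy2]

lemma desc_disjoint {y z : V} (hd : T.depth y = T.depth z) (hne : y ≠ z) :
    Disjoint (T.desc y) (T.desc z) := by
  rw [Finset.disjoint_left]
  intro w hwy hwz
  rw [T.mem_desc_iff] at hwy hwz
  obtain ⟨k, hk, hek⟩ := hwy
  obtain ⟨l, hl, hel⟩ := hwz
  have h1 := T.depth_iterate w k hk
  have h2 := T.depth_iterate w l hl
  rw [hek] at h1; rw [hel] at h2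
  have : k = l := by omega
  exact hne (by rw [← hek, ← hel, this])

lemma not_mem_biUnion_children (x : V) : x ∉ (T.children x).biUnion T.desc := by
  intro h
  rw [mem_biUnion] at h
  obtain ⟨y, hy, hxy⟩ := h
  have h1 := T.depth_of_mem_children hy
  have h2 := T.depth_le_of_mem_desc hxy
  omega

lemma subtreeCost_eq (c : V → ℝ) (x : V) :
    T.subtreeCost c x = c x + ∑ y ∈ T.children x, T.subtreeCost c y := by
  rw [subtreeCost, T.desc_eq, Finset.sum_insert (T.not_mem_biUnion_children x),
    Finset.sum_biUnion]
  · rfl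
  · intro y hy z hz hne
    exact T.desc_disjoint (by rw [T.depth_of_mem_children hy, T.depth_of_mem_children hz]) hne

lemma children_disjoint {x y : V} (h : x ≠ y) : Disjoint (T.children x) (T.children y) := by
  rw [Finset.disjoint_left]
  intro w hw hw'
  rw [T.mem_children_iff] at hw hw'
  exact h (hw.2 ▸ hw'.2)

lemma forestCost_rec (c : V → ℝ) (v : Finset V) :
    T.forestCost c v = (∑ x ∈ v, c x) + T.forestCost c (T.succs v) := by
  rw [forestCost, forestCost, succs, Finset.sum_biUnion (fun x _ y _ h => T.children_disjoint h),
    ← Finset.sum_add_distrib]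
  exact Finset.sum_congr rfl fun x _ => T.subtreeCost_eq c x

lemma forestCost_leaf (c : V → ℝ) (v : Finset V) (h : T.succs v = ∅) :
    T.forestCost c v = ∑ x ∈ v, c x := by
  rw [T.forestCost_rec, h]; simp [forestCost]

/-! ### hyper facts -/

lemma mem_hyper_facts {B : ℕ} (hB : 1 ≤ B) {v w : Finset V} (hS : T.succs v ≠ ∅)
    (hw : w ∈ T.hyper B v) :
    w ⊆ T.succs v ∧ w.card = min B (T.succs v).card ∧ w.Nonempty := by
  rw [hyper, mem_powersetCard] at hw
  have hn : 1 ≤ (T.succs v).card := card_pos.mpr (nonempty_iff_ne_empty.mpr hS)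
  refine ⟨hw.1, hw.2, ?_⟩
  rw [← card_pos, hw.2]; omega

lemma depth_mem_succs {v : Finset V} {x : V} (hx : x ∈ T.succs v) :
    ∃ p ∈ v, T.depth x = T.depth p + 1 := by
  rw [succs, mem_biUnion] at hx
  obtain ⟨p, hp, hxp⟩ := hx
  exact ⟨p, hp, T.depth_of_mem_children hxp⟩

lemma hyper_hypernode {B : ℕ} (hB : 1 ≤ B) {v w : Finset V} (hv : T.IsHypernode v)
    (hS : T.succs v ≠ ∅) (hw : w ∈ T.hyper B v) : T.IsHypernode w := by
  obtain ⟨hsub, hcard, hne⟩ := T.mem_hyper_facts hB hS hw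
  refine ⟨hne, fun a ha b hb => ?_⟩
  obtain ⟨p, hp, hdp⟩ := T.depth_mem_succs (hsub ha)
  obtain ⟨q, hq, hdq⟩ := T.depth_mem_succs (hsub hb)
  rw [hdp, hdq, hv.2 p hp q hq]

lemma depth_hyper {B : ℕ} (hB : 1 ≤ B) {v w : Finset V} (hv : T.IsHypernode v)
    (hS : T.succs v ≠ ∅) (hw : w ∈ T.hyper B v) {x : V} (hx : x ∈ w) {p : V} (hp : p ∈ v) :
    T.depth x = T.depth p + 1 := by
  obtain ⟨hsub, _, _⟩ := T.mem_hyper_facts hB hS hw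
  obtain ⟨q, hq, hdq⟩ := T.depth_mem_succs (hsub hx)
  rw [hdq, hv.2 q hq p hp]

/-! ### seiE equation lemmas -/

lemma seiE_zero (c : V → ℝ) (B : ℕ) (r : V → ℝ) (v : Finset V) (g : ℝ → ℝ) :
    seiE T c B r 0 v g = g ((∑ x ∈ v, c x) / (v.card : ℝ)) := rfl

lemma seiE_succ (c : V → ℝ) (B : ℕ) (r : V → ℝ) (fuel : ℕ) (v : Finset V) (g : ℝ → ℝ) :
    seiE T c B r (fuel + 1) v g =
      if T.succs v = ∅ then g ((∑ x ∈ v, c x) / (v.card : ℝ))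
      else
        ∑ w ∈ T.hyper B v,
          ((∑ a ∈ w, r a) /
              ((∑ a ∈ T.succs v, r a) *
                ((((T.succs v).card - 1).choose (w.card - 1) : ℕ) : ℝ))) *
            seiE T c B r fuel w fun y =>
              g ((∑ x ∈ v, c x) / (v.card : ℝ) +
                ((w.card : ℝ) / (v.card : ℝ)) *
                  ((∑ a ∈ T.succs v, r a) / (∑ a ∈ w, r a)) * y) := rfl

/-! ### probability sum -/

lemma prob_sum {B : ℕ} (hB : 1 ≤ B) (r : V → ℝ) (hr : ∀ x : V, 0 < r x) {v : Finset V}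
    (hS : T.succs v ≠ ∅) :
    ∑ w ∈ T.hyper B v,
      (∑ a ∈ w, r a) /
        ((∑ a ∈ T.succs v, r a) *
          ((((T.succs v).card - 1).choose (w.card - 1) : ℕ) : ℝ)) = 1 := by
  set S := T.succs v with hSdef
  have hn : 1 ≤ S.card := card_pos.mpr (nonempty_iff_ne_empty.mpr hS)
  set k := min B S.card with hk
  have hk1 : 1 ≤ k := le_min hB hn
  have hCpos : 0 < (S.card - 1).choose (k - 1) := Nat.choose_pos (by omega)
  have hrS : 0 < ∑ a ∈ S, r a := Finset.sum_pos (fun a _ => hr a)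
    (nonempty_iff_ne_empty.mpr hS)
  have hcongr : ∀ w ∈ T.hyper B v,
      (∑ a ∈ w, r a) /
        ((∑ a ∈ S, r a) * (((S.card - 1).choose (w.card - 1) : ℕ) : ℝ))
      = (∑ a ∈ w, r a) /
        ((∑ a ∈ S, r a) * (((S.card - 1).choose (k - 1) : ℕ) : ℝ)) := by
    intro w hw
    rw [(T.mem_hyper_facts hB hS hw).2.1]
  rw [Finset.sum_congr rfl hcongr, ← Finset.sum_div, hyper, ← hSdef, ← hk,
    sum_powersetCard_sum' S r k hk1]
  rw [mul_comm, div_self]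
  positivity

/-! ### linearity of seiE -/

lemma seiE_mul_add (c : V → ℝ) (B : ℕ) (r : V → ℝ) :
    ∀ (fuel : ℕ) (v : Finset V) (a : ℝ) (g h : ℝ → ℝ),
      seiE T c B r fuel v (fun y => a * g y + h y)
        = a * seiE T c B r fuel v g + seiE T c B r fuel v h := by
  intro fuel
  induction fuel with
  | zero => intro v a g h; simp [seiE_zero]
  | succ n ih =>
    intro v a g h
    by_cases hS : T.succs v = ∅
    · simp [seiE_succ, hS]
    · rw [seiE_succ, seiE_succ, seiE_succ, if_neg hS, if_neg hS, if_neg hS]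
      rw [Finset.mul_sum, ← Finset.sum_add_distrib]
      apply Finset.sum_congr rfl
      intro w hw
      rw [ih]
      ring

lemma seiE_const (c : V → ℝ) {B : ℕ} (hB : 1 ≤ B) (r : V → ℝ) (hr : ∀ x : V, 0 < r x) :
    ∀ (fuel : ℕ) (v : Finset V) (b : ℝ), seiE T c B r fuel v (fun _ => b) = b := by
  intro fuel
  induction fuel with
  | zero => intro v b; simp [seiE_zero]
  | succ n ih =>
    intro v b
    by_cases hS : T.succs v = ∅
    · simp [seiE_succ, hS]
    · rw [seiE_succ, if_neg hS]
      have : ∀ w ∈ T.hyper B v,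
          ((∑ a ∈ w, r a) /
            ((∑ a ∈ T.succs v, r a) *
              ((((T.succs v).card - 1).choose (w.card - 1) : ℕ) : ℝ))) *
            seiE T c B r n w (fun _ => b)
          = ((∑ a ∈ w, r a) /
            ((∑ a ∈ T.succs v, r a) *
              ((((T.succs v).card - 1).choose (w.card - 1) : ℕ) : ℝ))) * b := by
        intro w hw; rw [ih]
      rw [Finset.sum_congr rfl this, ← Finset.sum_mul, T.prob_sum hB r hr hS, one_mul]

lemma seiE_affine (c : V → ℝ) {B : ℕ} (hB : 1 ≤ B) (r : V → ℝ) (hr : ∀ x : V, 0 < r x)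
    (fuel : ℕ) (v : Finset V) (a b : ℝ) (g : ℝ → ℝ) :
    seiE T c B r fuel v (fun y => a * g y + b) = a * seiE T c B r fuel v g + b := by
  rw [show (fun y => a * g y + b) = (fun y => a * g y + (fun _ : ℝ => b) y) from rfl,
    T.seiE_mul_add, T.seiE_const c hB r hr]

lemma seiE_congr (c : V → ℝ) (B : ℕ) (r : V → ℝ) :
    ∀ (fuel : ℕ) (v : Finset V) {g h : ℝ → ℝ}, (∀ y, g y = h y) →
      seiE T c B r fuel v g = seiE T c B r fuel v h := by
  intro fuel
  induction fuel with
  | zero => intro v g h hgh; exact hgh _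
  | succ n ih =>
    intro v g h hgh
    by_cases hS : T.succs v = ∅
    · rw [seiE_succ, seiE_succ, if_pos hS, if_pos hS]; exact hgh _
    · rw [seiE_succ, seiE_succ, if_neg hS, if_neg hS]
      exact Finset.sum_congr rfl fun w hw => by rw [ih w (fun y => hgh _)]

lemma seiE_unbiased (c : V → ℝ) {B : ℕ} (hB : 1 ≤ B) (r : V → ℝ) (hr : ∀ x : V, 0 < r x) :
    ∀ (fuel : ℕ) (v : Finset V), T.IsHypernode v →
      (∀ x ∈ v, Fintype.card V ≤ fuel + T.depth x) →
      seiE T c B r fuel v (fun y => y) = T.forestCost c v / (v.card : ℝ) := by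
  intro fuel
  induction fuel with
  | zero =>
    intro v hv hcond
    obtain ⟨x, hx⟩ := hv.1
    exact absurd (hcond x hx) (by have := T.depth_lt_card x; omega)
  | succ n ih =>
    intro v hv hcond
    by_cases hS : T.succs v = ∅
    · rw [seiE_succ, if_pos hS, T.forestCost_leaf c v hS]
    · have hv0 : (0 : ℝ) < (v.card : ℝ) := by
        exact_mod_cast card_pos.mpr hv.1
      have hn : 1 ≤ (T.succs v).card := card_pos.mpr (nonempty_iff_ne_empty.mpr hS)
      have hk1 : 1 ≤ min B (T.succs v).card := le_min hB hn
      have hC : (0 : ℝ) <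
          ((((T.succs v).card - 1).choose (min B (T.succs v).card - 1) : ℕ) : ℝ) := by
        exact_mod_cast Nat.choose_pos (by omega)
      have hrS : (0 : ℝ) < ∑ a ∈ T.succs v, r a :=
        Finset.sum_pos (fun a _ => hr a) (nonempty_iff_ne_empty.mpr hS)
      rw [seiE_succ, if_neg hS]
      have hterm : ∀ w ∈ T.hyper B v,
          ((∑ a ∈ w, r a) /
              ((∑ a ∈ T.succs v, r a) *
                ((((T.succs v).card - 1).choose (w.card - 1) : ℕ) : ℝ))) *
            seiE T c B r n w (fun y =>
              (fun y => y) ((∑ x ∈ v, c x) / (v.card : ℝ) +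
                ((w.card : ℝ) / (v.card : ℝ)) *
                  ((∑ a ∈ T.succs v, r a) / (∑ a ∈ w, r a)) * y))
          = T.forestCost c w *
              (1 / (((((T.succs v).card - 1).choose (min B (T.succs v).card - 1) : ℕ) : ℝ) *
                (v.card : ℝ)))
            + ((∑ a ∈ w, r a) /
                ((∑ a ∈ T.succs v, r a) *
                  ((((T.succs v).card - 1).choose (w.card - 1) : ℕ) : ℝ))) *
              ((∑ x ∈ v, c x) / (v.card : ℝ)) := by
        intro w hw
        obtain ⟨hsub, hcard, hne⟩ := T.mem_hyper_facts hB hS hw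
        have hw0 : (0 : ℝ) < (w.card : ℝ) := by exact_mod_cast card_pos.mpr hne
        have hQ : (0 : ℝ) < ∑ a ∈ w, r a := Finset.sum_pos (fun a _ => hr a) hne
        have hwhyp := T.hyper_hypernode hB hv hS hw
        have hwcond : ∀ x ∈ w, Fintype.card V ≤ n + T.depth x := by
          intro x hx
          obtain ⟨p, hp⟩ := hv.1
          have hdx := T.depth_hyper hB hv hS hw hx hp
          have := hcond p hp
          omega
        have h1 : seiE T c B r n w (fun y =>
              (fun y => y) ((∑ x ∈ v, c x) / (v.card : ℝ) +
                ((w.card : ℝ) / (v.card : ℝ)) *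
                  ((∑ a ∈ T.succs v, r a) / (∑ a ∈ w, r a)) * y))
            = ((w.card : ℝ) / (v.card : ℝ)) *
                ((∑ a ∈ T.succs v, r a) / (∑ a ∈ w, r a)) *
                seiE T c B r n w (fun y => y) + (∑ x ∈ v, c x) / (v.card : ℝ) := by
          refine (T.seiE_congr c B r n w (fun y => ?_)).trans
            (T.seiE_affine c hB r hr n w _ _ (fun y => y))
          show _ = _ * _ + _
          ring
        rw [h1, ih w hwhyp hwcond, hcard]
        have hC' : ((((T.succs v).card - 1).choose (min B (T.succs v).card - 1) : ℕ) : ℝ) ≠ 0 :=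
          ne_of_gt hC
        field_simp
      rw [Finset.sum_congr rfl hterm, Finset.sum_add_distrib, ← Finset.sum_mul,
        ← Finset.sum_mul, T.prob_sum hB r hr hS, one_mul]
      have hF : ∑ w ∈ T.hyper B v, T.forestCost c w
          = ((((T.succs v).card - 1).choose (min B (T.succs v).card - 1) : ℕ) : ℝ) *
            T.forestCost c (T.succs v) :=
        sum_powersetCard_sum' (T.succs v) (T.subtreeCost c) (min B (T.succs v).card) hk1
      rw [hF, T.forestCost_rec c v]
      field_simp
      ring

lemma seiE_fuel_succ (c : V → ℝ) {B : ℕ} (hB : 1 ≤ B) (r : V → ℝ) :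
    ∀ (fuel : ℕ) (v : Finset V) (g : ℝ → ℝ), T.IsHypernode v →
      (∀ x ∈ v, Fintype.card V ≤ fuel + T.depth x) →
      seiE T c B r fuel v g = seiE T c B r (fuel + 1) v g := by
  intro fuel
  induction fuel with
  | zero =>
    intro v g hv hcond
    obtain ⟨x, hx⟩ := hv.1
    exact absurd (hcond x hx) (by have := T.depth_lt_card x; omega)
  | succ n ih =>
    intro v g hv hcond
    by_cases hS : T.succs v = ∅
    · rw [seiE_succ, seiE_succ, if_pos hS, if_pos hS]
    · rw [seiE_succ, seiE_succ, if_neg hS, if_neg hS]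
      apply Finset.sum_congr rfl
      intro w hw
      congr 1
      apply ih w _ (T.hyper_hypernode hB hv hS hw)
      intro x hx
      obtain ⟨p, hp⟩ := hv.1
      have hdx := T.depth_hyper hB hv hS hw hx hp
      have := hcond p hp
      omega

lemma seiE_scaled (c : V → ℝ) {B : ℕ} (hB : 1 ≤ B) (r : V → ℝ) (hr : ∀ x : V, 0 < r x)
    (fuel : ℕ) (v : Finset V) (hv : T.IsHypernode v)
    (hcond : ∀ x ∈ v, Fintype.card V ≤ fuel + T.depth x) :
    seiE T c B r fuel v (fun y => (v.card : ℝ) * y) = T.forestCost c v := by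
  have hv0 : (v.card : ℝ) ≠ 0 := by
    have := card_pos.mpr hv.1
    positivity
  have h1 : seiE T c B r fuel v (fun y => (v.card : ℝ) * y)
      = (v.card : ℝ) * seiE T c B r fuel v (fun y => y) + 0 :=
    (T.seiE_congr c B r fuel v (fun y => by ring)).trans
      (T.seiE_affine c hB r hr fuel v _ _ (fun y => y))
  rw [h1, T.seiE_unbiased c hB r hr fuel v hv hcond]
  field_simp
  ring

lemma seiE_step (c : V → ℝ) {B : ℕ} (hB : 1 ≤ B) (r : V → ℝ) (hr : ∀ x : V, 0 < r x)
    (v : Finset V) (hv : T.IsHypernode v) (hS : T.succs v ≠ ∅) (g : ℝ → ℝ) :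
    seiE T c B r (Fintype.card V) v g =
      ∑ w ∈ T.hyper B v,
        ((∑ a ∈ w, r a) /
            ((∑ a ∈ T.succs v, r a) *
              ((((T.succs v).card - 1).choose (w.card - 1) : ℕ) : ℝ))) *
          seiE T c B r (Fintype.card V) w (fun y =>
            g ((∑ x ∈ v, c x) / (v.card : ℝ) +
              ((w.card : ℝ) / (v.card : ℝ)) *
                ((∑ a ∈ T.succs v, r a) / (∑ a ∈ w, r a)) * y)) := by
  have hNpos : 0 < Fintype.card V := @Fintype.card_pos V _ ⟨T.root⟩
  obtain ⟨M, hM⟩ : ∃ M, Fintype.card V = M + 1 := ⟨Fintype.card V - 1, by omega⟩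
  conv_lhs => rw [hM]
  rw [seiE_succ, if_neg hS]
  refine Finset.sum_congr rfl fun w hw => ?_
  congr 1
  rw [T.seiE_fuel_succ c hB r M w _ (T.hyper_hypernode hB hv hS hw) ?_, ← hM]
  intro x hx
  obtain ⟨p, hp⟩ := hv.1
  have hdx := T.depth_hyper hB hv hS hw hx hp
  omega

/-- Paper's Theorem 4: the variance of the SEI estimate satisfies
`Var(|v|·C_SEI(T_v)) = ∑_{w ∈ H(v)} (1/C(|S(v)|-1,|w|-1)) · (r(S(v))/r(w)) ·
(Var(|w|·C_SEI(T_w)) + Cost(T_w)²) − Cost(T_{S(v)})²`. -/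
theorem sei_variance (T : FinRootedTree V) (c : V → ℝ) (hc : ∀ x, 0 ≤ c x)
    (B : ℕ) (hB : 1 ≤ B) (r : V → ℝ) (hr : ∀ x : V, 0 < r x)
    (v : Finset V) (hv : T.IsHypernode v) (hS : T.succs v ≠ ∅) :
    seiVar T c B r (Fintype.card V) v =
      (∑ w ∈ T.hyper B v,
        (1 / ((((T.succs v).card - 1).choose (w.card - 1) : ℕ) : ℝ)) *
          ((∑ a ∈ T.succs v, r a) / (∑ a ∈ w, r a)) *
          (seiVar T c B r (Fintype.card V) w + T.forestCost c w ^ 2)) -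
        T.forestCost c (T.succs v) ^ 2 := by
  have hv0 : ((v.card : ℝ)) ≠ 0 := by
    have := card_pos.mpr hv.1; positivity
  have hn : 1 ≤ (T.succs v).card := card_pos.mpr (nonempty_iff_ne_empty.mpr hS)
  have hk1 : 1 ≤ min B (T.succs v).card := le_min hB hn
  have hC : (0 : ℝ) <
      ((((T.succs v).card - 1).choose (min B (T.succs v).card - 1) : ℕ) : ℝ) := by
    exact_mod_cast Nat.choose_pos (by omega)
  have hCne : ((((T.succs v).card - 1).choose (min B (T.succs v).card - 1) : ℕ) : ℝ) ≠ 0 :=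
    ne_of_gt hC
  have hrS : (0 : ℝ) < ∑ a ∈ T.succs v, r a :=
    Finset.sum_pos (fun a _ => hr a) (nonempty_iff_ne_empty.mpr hS)
  have hF : ∑ w ∈ T.hyper B v, T.forestCost c w
      = ((((T.succs v).card - 1).choose (min B (T.succs v).card - 1) : ℕ) : ℝ) *
        T.forestCost c (T.succs v) :=
    sum_powersetCard_sum' (T.succs v) (T.subtreeCost c) (min B (T.succs v).card) hk1
  have hUB : ∀ w ∈ T.hyper B v,
      seiE T c B r (Fintype.card V) w (fun y => (w.card : ℝ) * y) = T.forestCost c w :=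
    fun w hw => T.seiE_scaled c hB r hr _ w (T.hyper_hypernode hB hv hS hw)
      (fun x _ => by have := T.depth_lt_card x; omega)
  -- first moment
  have hE : seiE T c B r (Fintype.card V) v (fun y => (v.card : ℝ) * y)
      = T.forestCost c (T.succs v) + ∑ x ∈ v, c x := by
    rw [T.seiE_step c hB r hr v hv hS]
    have hterm : ∀ w ∈ T.hyper B v,
        ((∑ a ∈ w, r a) /
            ((∑ a ∈ T.succs v, r a) *
              ((((T.succs v).card - 1).choose (w.card - 1) : ℕ) : ℝ))) *
          seiE T c B r (Fintype.card V) w (fun y =>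
            (fun y => (v.card : ℝ) * y)
              ((∑ x ∈ v, c x) / (v.card : ℝ) +
                ((w.card : ℝ) / (v.card : ℝ)) *
                  ((∑ a ∈ T.succs v, r a) / (∑ a ∈ w, r a)) * y))
        = T.forestCost c w *
            (1 / ((((T.succs v).card - 1).choose (min B (T.succs v).card - 1) : ℕ) : ℝ))
          + ((∑ a ∈ w, r a) /
              ((∑ a ∈ T.succs v, r a) *
                ((((T.succs v).card - 1).choose (w.card - 1) : ℕ) : ℝ))) *
            (∑ x ∈ v, c x) := by
      intro w hw
      obtain ⟨hsub, hcard, hne⟩ := T.mem_hyper_facts hB hS hw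
      have hQ : (0 : ℝ) < ∑ a ∈ w, r a := Finset.sum_pos (fun a _ => hr a) hne
      have h1 : seiE T c B r (Fintype.card V) w (fun y =>
            (fun y => (v.card : ℝ) * y)
              ((∑ x ∈ v, c x) / (v.card : ℝ) +
                ((w.card : ℝ) / (v.card : ℝ)) *
                  ((∑ a ∈ T.succs v, r a) / (∑ a ∈ w, r a)) * y))
          = ((∑ a ∈ T.succs v, r a) / (∑ a ∈ w, r a)) *
              seiE T c B r (Fintype.card V) w (fun y => (w.card : ℝ) * y)
            + (∑ x ∈ v, c x) :=
        (T.seiE_congr c B r (Fintype.card V) w (fun y => by field_simp; ring)).trans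
          (T.seiE_affine c hB r hr (Fintype.card V) w _ _ (fun y => (w.card : ℝ) * y))
      rw [h1, hUB w hw, hcard]
      field_simp
    rw [Finset.sum_congr rfl hterm, Finset.sum_add_distrib, ← Finset.sum_mul,
      ← Finset.sum_mul, T.prob_sum hB r hr hS, one_mul, hF]
    field_simp
  -- second moment
  have hA : seiE T c B r (Fintype.card V) v (fun y => ((v.card : ℝ) * y) ^ 2)
      = ∑ w ∈ T.hyper B v,
          ((1 / ((((T.succs v).card - 1).choose (w.card - 1) : ℕ) : ℝ)) *
              ((∑ a ∈ T.succs v, r a) / (∑ a ∈ w, r a)) *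
              seiE T c B r (Fintype.card V) w (fun y => ((w.card : ℝ) * y) ^ 2)
            + (T.forestCost c w *
                (2 * (∑ x ∈ v, c x) /
                  ((((T.succs v).card - 1).choose (min B (T.succs v).card - 1) : ℕ) : ℝ))
              + ((∑ a ∈ w, r a) /
                  ((∑ a ∈ T.succs v, r a) *
                    ((((T.succs v).card - 1).choose (w.card - 1) : ℕ) : ℝ))) *
                (∑ x ∈ v, c x) ^ 2)) := by
    rw [T.seiE_step c hB r hr v hv hS]
    refine Finset.sum_congr rfl fun w hw => ?_
    obtain ⟨hsub, hcard, hne⟩ := T.mem_hyper_facts hB hS hw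
    have hQ : (0 : ℝ) < ∑ a ∈ w, r a := Finset.sum_pos (fun a _ => hr a) hne
    have h2 : seiE T c B r (Fintype.card V) w (fun y =>
          (fun y => ((v.card : ℝ) * y) ^ 2)
            ((∑ x ∈ v, c x) / (v.card : ℝ) +
              ((w.card : ℝ) / (v.card : ℝ)) *
                ((∑ a ∈ T.succs v, r a) / (∑ a ∈ w, r a)) * y))
        = ((∑ a ∈ T.succs v, r a) / (∑ a ∈ w, r a)) ^ 2 *
            seiE T c B r (Fintype.card V) w (fun y => ((w.card : ℝ) * y) ^ 2)
          + ((2 * (∑ x ∈ v, c x) * ((∑ a ∈ T.succs v, r a) / (∑ a ∈ w, r a))) *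
              seiE T c B r (Fintype.card V) w (fun y => (w.card : ℝ) * y)
            + (∑ x ∈ v, c x) ^ 2) := by
      have e1 : seiE T c B r (Fintype.card V) w (fun y =>
            (fun y => ((v.card : ℝ) * y) ^ 2)
              ((∑ x ∈ v, c x) / (v.card : ℝ) +
                ((w.card : ℝ) / (v.card : ℝ)) *
                  ((∑ a ∈ T.succs v, r a) / (∑ a ∈ w, r a)) * y))
          = seiE T c B r (Fintype.card V) w (fun y =>
              ((∑ a ∈ T.succs v, r a) / (∑ a ∈ w, r a)) ^ 2 *
                (((w.card : ℝ) * y) ^ 2) +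
              ((2 * (∑ x ∈ v, c x) * ((∑ a ∈ T.succs v, r a) / (∑ a ∈ w, r a))) *
                ((w.card : ℝ) * y) + (∑ x ∈ v, c x) ^ 2)) :=
        T.seiE_congr c B r (Fintype.card V) w (fun y => by field_simp; ring)
      have e2 : seiE T c B r (Fintype.card V) w (fun y =>
            ((∑ a ∈ T.succs v, r a) / (∑ a ∈ w, r a)) ^ 2 *
              (((w.card : ℝ) * y) ^ 2) +
            ((2 * (∑ x ∈ v, c x) * ((∑ a ∈ T.succs v, r a) / (∑ a ∈ w, r a))) *
              ((w.card : ℝ) * y) + (∑ x ∈ v, c x) ^ 2))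
          = ((∑ a ∈ T.succs v, r a) / (∑ a ∈ w, r a)) ^ 2 *
              seiE T c B r (Fintype.card V) w (fun y => ((w.card : ℝ) * y) ^ 2)
            + seiE T c B r (Fintype.card V) w (fun y =>
                (2 * (∑ x ∈ v, c x) * ((∑ a ∈ T.succs v, r a) / (∑ a ∈ w, r a))) *
                  ((w.card : ℝ) * y) + (∑ x ∈ v, c x) ^ 2) :=
        T.seiE_mul_add c B r (Fintype.card V) w _ _ _
      have e3 : seiE T c B r (Fintype.card V) w (fun y =>
            (2 * (∑ x ∈ v, c x) * ((∑ a ∈ T.succs v, r a) / (∑ a ∈ w, r a))) *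
              ((w.card : ℝ) * y) + (∑ x ∈ v, c x) ^ 2)
          = (2 * (∑ x ∈ v, c x) * ((∑ a ∈ T.succs v, r a) / (∑ a ∈ w, r a))) *
              seiE T c B r (Fintype.card V) w (fun y => (w.card : ℝ) * y)
            + (∑ x ∈ v, c x) ^ 2 :=
        T.seiE_affine c hB r hr (Fintype.card V) w _ _ (fun y => (w.card : ℝ) * y)
      rw [e1, e2, e3]
    rw [h2, hUB w hw, hcard]
    field_simp
  rw [seiVar, hA, hE]
  have hR : ∀ w ∈ T.hyper B v,
      (1 / ((((T.succs v).card - 1).choose (w.card - 1) : ℕ) : ℝ)) *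
          ((∑ a ∈ T.succs v, r a) / (∑ a ∈ w, r a)) *
          (seiVar T c B r (Fintype.card V) w + T.forestCost c w ^ 2)
      = (1 / ((((T.succs v).card - 1).choose (w.card - 1) : ℕ) : ℝ)) *
          ((∑ a ∈ T.succs v, r a) / (∑ a ∈ w, r a)) *
          seiE T c B r (Fintype.card V) w (fun y => ((w.card : ℝ) * y) ^ 2) := by
    intro w hw
    rw [seiVar, hUB w hw]
    ring
  rw [Finset.sum_congr rfl hR, Finset.sum_add_distrib, Finset.sum_add_distrib,
    ← Finset.sum_mul, ← Finset.sum_mul, T.prob_sum hB r hr hS, one_mul, hF]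
  have hcancel : ((((T.succs v).card - 1).choose (min B (T.succs v).card - 1) : ℕ) : ℝ) *
      T.forestCost c (T.succs v) *
      (2 * (∑ x ∈ v, c x) /
        ((((T.succs v).card - 1).choose (min B (T.succs v).card - 1) : ℕ) : ℝ))
      = 2 * T.forestCost c (T.succs v) * (∑ x ∈ v, c x) := by
    field_simp
  rw [hcancel]
  ring

end FinRootedTree
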